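/- Let ξ < 0 and μ ∈ ℝ, and consider the quadratic polynomial p(z) = (3 − 2ξ) z² − 4(μ + 1) z + (1 + 2μ). Then both (complex) roots of p have modulus strictly less than 1 if and only if (ξ − 4)/3 < μ < −ξ. -/

import Mathlib

lemma quad_root_ge_one (a b c : ℝ) (ha : 0 < a) (h1 : a + b + c ≤ 0) :
    ∃ x : ℝ, 1 ≤ x ∧ a * x ^ 2 + b * x + c = 0 := by
  set M : ℝ := max 1 ((|b| + |c| + 1) / a) with hM
  have hM1 : (1 : ℝ) ≤ M := le_max_left _ _
  have hM2 : (|b| + |c| + 1) / a ≤ M := le_max_right _ _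
  have haM : |b| + |c| + 1 ≤ a * M := by
    rw [mul_comm]
    exact (div_le_iff₀ ha).mp hM2
  have hfM : 0 < a * M ^ 2 + b * M + c := by
    have hb : -(|b| * M) ≤ b * M := by
      have := neg_abs_le b
      nlinarith [abs_nonneg b]
    have hc : -|c| ≤ c := neg_abs_le c
    nlinarith [abs_nonneg b, abs_nonneg c]
  have hcont : ContinuousOn (fun x : ℝ => a * x ^ 2 + b * x + c) (Set.Icc 1 M) := by
    fun_prop
  have key := intermediate_value_Icc hM1 hcont
  have h0 : (0 : ℝ) ∈ Set.Icc (a * 1 ^ 2 + b * 1 + c) (a * M ^ 2 + b * M + c) := by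
    constructor <;> nlinarith
  obtain ⟨x, hx, hfx⟩ := key h0
  exact ⟨x, hx.1, hfx⟩

lemma quad_root_le_neg_one (a b c : ℝ) (ha : 0 < a) (h1 : a - b + c ≤ 0) :
    ∃ x : ℝ, x ≤ -1 ∧ a * x ^ 2 + b * x + c = 0 := by
  obtain ⟨x, hx1, hx2⟩ := quad_root_ge_one a (-b) c ha (by linarith)
  exact ⟨-x, by linarith, by nlinarith⟩

theorem sbdf2_characteristic_roots_stability (ξ μ : ℝ) (hξ : ξ < 0) :
    (∀ z : ℂ, ((3 : ℂ) - 2 * (ξ : ℂ)) * z ^ 2 - 4 * ((μ : ℂ) + 1) * z + (1 + 2 * (μ : ℂ)) = 0 →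
        ‖z‖ < 1) ↔ ((ξ - 4) / 3 < μ ∧ μ < -ξ) := by
  have ha : 0 < 3 - 2 * ξ := by linarith
  constructor
  · intro h
    constructor
    · -- p(-1) > 0, else a real root ≤ -1
      by_contra hc
      push_neg at hc
      obtain ⟨x, hx1, hx2⟩ := quad_root_le_neg_one (3 - 2 * ξ) (-(4 * (μ + 1))) (1 + 2 * μ) ha
        (by linarith)
      have hx2' : ((3 - 2*ξ) * x^2 - 4*(μ+1)*x + (1+2*μ) : ℝ) = 0 := by linear_combination hx2
      have hroot : ((3 : ℂ) - 2 * (ξ : ℂ)) * (x:ℂ) ^ 2 - 4 * ((μ : ℂ) + 1) * (x:ℂ)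
          + (1 + 2 * (μ : ℂ)) = 0 := by
        have := congrArg (fun t : ℝ => (t : ℂ)) hx2'
        push_cast at this
        linear_combination this
      have habs := h (x : ℂ) hroot
      rw [Complex.norm_real, Real.norm_eq_abs] at habs
      have : (1:ℝ) ≤ |x| := le_abs.mpr (Or.inr (by linarith))
      linarith
    · -- p(1) > 0, else a real root ≥ 1
      by_contra hc
      push_neg at hc
      obtain ⟨x, hx1, hx2⟩ := quad_root_ge_one (3 - 2 * ξ) (-(4 * (μ + 1))) (1 + 2 * μ) ha
        (by linarith)
      have hx2' : ((3 - 2*ξ) * x^2 - 4*(μ+1)*x + (1+2*μ) : ℝ) = 0 := by linear_combination hx2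
      have hroot : ((3 : ℂ) - 2 * (ξ : ℂ)) * (x:ℂ) ^ 2 - 4 * ((μ : ℂ) + 1) * (x:ℂ)
          + (1 + 2 * (μ : ℂ)) = 0 := by
        have := congrArg (fun t : ℝ => (t : ℂ)) hx2'
        push_cast at this
        linear_combination this
      have habs := h (x : ℂ) hroot
      rw [Complex.norm_real, Real.norm_eq_abs] at habs
      have : (1:ℝ) ≤ |x| := le_abs.mpr (Or.inl hx1)
      linarith
  · rintro ⟨h1, h2⟩ z hz
    -- conditions: p(1) = -2(ξ+μ) > 0, p(-1) = 8-2ξ+6μ > 0, c = 1+2μ < a = 3-2ξ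
    have hp1 : 0 < -2 * (ξ + μ) := by linarith
    have hpm1 : 0 < 8 - 2 * ξ + 6 * μ := by linarith
    have hca : 1 + 2 * μ < 3 - 2 * ξ := by linarith
    set x := z.re with hx
    set y := z.im with hy
    -- extract real and imaginary parts of the root equation
    have hre : (3 - 2*ξ) * (x^2 - y^2) - 4*(μ+1)*x + (1 + 2*μ) = 0 := by
      have := congrArg Complex.re hz
      simp [Complex.add_re, Complex.sub_re, Complex.mul_re, Complex.mul_im, pow_two] at this
      linarith [this]
    have him : y * (2 * (3 - 2*ξ) * x - 4*(μ+1)) = 0 := by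
      have := congrArg Complex.im hz
      simp [Complex.add_im, Complex.sub_im, Complex.mul_re, Complex.mul_im, pow_two] at this
      nlinarith [this]
    have habs_sq : ‖z‖ ^ 2 = x ^ 2 + y ^ 2 := by
      rw [Complex.sq_norm, Complex.normSq_apply]; ring
    rcases mul_eq_zero.mp him with hy0 | hxeq
    · -- real root
      have hq : (3 - 2*ξ) * x^2 - 4*(μ+1)*x + (1 + 2*μ) = 0 := by
        rw [hy0] at hre; nlinarith [hre]
      have hxlt : |x| < 1 := by
        refine abs_lt.mpr ⟨?_, ?_⟩
        · -- x > -1 : otherwise contradiction with p(-1)>0 and c<a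
          by_contra hxe
          push_neg at hxe
          -- x ≤ -1
          nlinarith [sq_nonneg (x + 1), sq_nonneg x]
        · by_contra hxe
          push_neg at hxe
          nlinarith [sq_nonneg (x - 1), sq_nonneg x]
      calc ‖z‖ = Real.sqrt (x^2 + y^2) := by
            rw [← habs_sq]; rw [Real.sqrt_sq (norm_nonneg z)]
        _ < 1 := by
            rw [hy0]
            rw [show x^2 + 0^2 = x^2 by ring, Real.sqrt_sq_eq_abs]
            exact hxlt
    · -- complex pair: a|z|² = c
      have hbx : 4*(μ+1) = 2 * (3 - 2*ξ) * x := by linarith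
      have hsum : (3 - 2*ξ) * (x^2 + y^2) = 1 + 2*μ := by nlinarith [hre]
      have : x^2 + y^2 < 1 := by nlinarith
      have h0 : ‖z‖^2 < 1 := by rw [habs_sq]; exact this
      nlinarith [norm_nonneg z, h0]
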